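/- Fix n ≥ 1 and integers 0 ≤ i_0 < ⋯ < i_{n−1} and 0 ≤ j_0 < ⋯ < j_{n−1}, and a ℤ-indexed family μ in a commutative ring. Define the Plücker coordinate p(i;j) = det(μ_{i_k − j_l})_{0≤k,l<n} and, for k ∈ ℤ, the action V_k on such determinants induced by the derivation μ_j ↦ (j+k)μ_{j+k}. Then V_k p(i;j) = Σ_{l=0}^{n−1} (i_l + k)·p(i_0,…,i_l+k,…,i_{n−1}; j) − Σ_{l=0}^{n−1} j_l·p(i; j_0,…,j_l−k,…,j_{n−1}). -/

import Mathlib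

open MvPolynomial Matrix

section Aux

variable {R : Type*} [CommRing R] {m : Type*} [Fintype m] [DecidableEq m]

lemma det_updateColumn_eq_sum (M : Matrix m m R) (b : m) (c : m → R) :
    (M.updateCol b c).det = ∑ a, adjugate M b a * c a := by
  rw [← cramer_apply, cramer_eq_adjugate_mulVec]
  simp [Matrix.mulVec, dotProduct]

lemma det_updateRow_eq_sum (M : Matrix m m R) (a : m) (r : m → R) :
    (M.updateRow a r).det = ∑ b, adjugate M b a * r b := by
  rw [← cramer_transpose_apply, cramer_eq_adjugate_mulVec]
  simp [Matrix.mulVec, dotProduct, ← adjugate_transpose]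

variable {A : Type*} [CommRing A] [Algebra ℂ A] (D : Derivation ℂ A A)

lemma derivation_map_prod {ι : Type*} [DecidableEq ι] (s : Finset ι) (f : ι → A) :
    D (∏ x ∈ s, f x) = ∑ x ∈ s, (∏ y ∈ s.erase x, f y) * D (f x) := by
  induction s using Finset.induction_on with
  | empty => simp [D.map_one_eq_zero]
  | insert s _ h ih =>
    rw [Finset.prod_insert h, D.leibniz, ih, Finset.sum_insert h, smul_eq_mul,
      Finset.mul_sum, Finset.erase_insert h, smul_eq_mul]
    rw [add_comm]
    congr 1
    refine Finset.sum_congr rfl fun x hx => ?_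
    have hxs : x ≠ s := fun e => h (e ▸ hx)
    rw [Finset.erase_insert_of_ne hxs.symm,
      Finset.prod_insert (fun hs => h (Finset.mem_of_mem_erase hs))]
    ring

lemma derivation_map_det {n : ℕ} (M : Matrix (Fin n) (Fin n) A) :
    D M.det = ∑ b, (M.updateCol b (fun a => D (M a b))).det := by
  classical
  rw [Matrix.det_apply, map_sum]
  have key : ∀ σ : Equiv.Perm (Fin n),
      D (Equiv.Perm.sign σ • ∏ x, M (σ x) x)
        = ∑ b, Equiv.Perm.sign σ •
            ((∏ y ∈ Finset.univ.erase b, M (σ y) y) * D (M (σ b) b)) := by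
    intro σ
    rw [← Finset.smul_sum]
    have h1 : D (Equiv.Perm.sign σ • ∏ x, M (σ x) x)
        = Equiv.Perm.sign σ • D (∏ x, M (σ x) x) := by
      rcases Int.units_eq_one_or (Equiv.Perm.sign σ) with h | h <;> simp [h]
    rw [h1, derivation_map_prod]
  simp_rw [key]
  rw [Finset.sum_comm]
  refine Finset.sum_congr rfl fun b _ => ?_
  rw [Matrix.det_apply]
  refine Finset.sum_congr rfl fun σ _ => ?_
  congr 1
  have h2 : ∀ x : Fin n, (M.updateCol b fun a => D (M a b)) (σ x) x
      = if x = b then D (M (σ x) b) else M (σ x) x := by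
    intro x
    rw [Matrix.updateCol_apply]
  rw [Finset.prod_congr rfl (fun x _ => h2 x),
    ← Finset.mul_prod_erase _ _ (Finset.mem_univ b), if_pos rfl]
  rw [Finset.prod_congr rfl (fun x hx => if_neg (Finset.mem_erase.mp hx).1)]
  ring

end Aux

/-- Action of the master symmetry `V_k` (the derivation with
`V_k μ_j = (j+k) μ_{j+k}`, the indeterminate `X j` of `MvPolynomial ℤ ℂ` playing
the role of `μ_j`) on the Plücker coordinates
`p(i;j) = det (μ_{i_a − j_b})_{0≤a,b<n}`:
`V_k p(i;j) = Σ_l (i_l + k) p(…, i_l + k, …; j) − Σ_l j_l p(i; …, j_l − k, …)`. -/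
theorem master_symmetry_on_plucker {n : ℕ} (hn : 1 ≤ n) (k : ℤ)
    (V : Derivation ℂ (MvPolynomial ℤ ℂ) (MvPolynomial ℤ ℂ))
    (hV : ∀ m : ℤ, V (X m) = (m + k) • X (m + k))
    (i j : Fin n → ℤ) (hi : StrictMono i) (hj : StrictMono j)
    (hi0 : ∀ l, 0 ≤ i l) (hj0 : ∀ l, 0 ≤ j l) :
    V (Matrix.of fun a b : Fin n => X (i a - j b)).det
      = ∑ l : Fin n, (i l + k) •
          (Matrix.of fun a b : Fin n => X (Function.update i l (i l + k) a - j b)).det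
        - ∑ l : Fin n, j l •
          (Matrix.of fun a b : Fin n => X (i a - Function.update j l (j l - k) b)).det := by
  classical
  set M : Matrix (Fin n) (Fin n) (MvPolynomial ℤ ℂ) :=
    Matrix.of fun a b : Fin n => X (i a - j b) with hM
  rw [derivation_map_det]
  have hsplit : ∀ b, (M.updateCol b fun a => V (M a b)).det
      = (M.updateCol b fun a =>
            ((i a + k : ℤ) : MvPolynomial ℤ ℂ) * X (i a + k - j b)).det
        - j b • (M.updateCol b fun a => X (i a - (j b - k))).det := by
    intro b
    have hcol : (fun a => V (M a b))
        = (fun a => ((i a + k : ℤ) : MvPolynomial ℤ ℂ) * X (i a + k - j b))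
          + fun a => ((-(j b) : ℤ) : MvPolynomial ℤ ℂ) * X (i a - (j b - k)) := by
      funext a
      show V (X (i a - j b)) = ((i a + k : ℤ) : MvPolynomial ℤ ℂ) * X (i a + k - j b)
          + ((-(j b) : ℤ) : MvPolynomial ℤ ℂ) * X (i a - (j b - k))
      rw [hV]
      have h1 : i a + k - j b = i a - j b + k := by ring
      have h2 : i a - (j b - k) = i a - j b + k := by ring
      rw [h1, h2, zsmul_eq_mul, ← add_mul]
      push_cast
      ring
    rw [hcol, Matrix.det_updateCol_add]
    have hsm : (M.updateCol b fun a =>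
          ((-(j b) : ℤ) : MvPolynomial ℤ ℂ) * X (i a - (j b - k))).det
        = -(j b • (M.updateCol b fun a => X (i a - (j b - k))).det) := by
      rw [show (fun a => ((-(j b) : ℤ) : MvPolynomial ℤ ℂ) * X (i a - (j b - k)))
          = ((-(j b) : ℤ) : MvPolynomial ℤ ℂ) • fun a => X (i a - (j b - k)) from rfl,
        Matrix.det_updateCol_smul, zsmul_eq_mul]
      push_cast
      ring
    rw [hsm]
    ring
  simp_rw [hsplit, Finset.sum_sub_distrib]
  congr 1
  · -- first sum: rows vs columns via adjugate
    have hrhs : ∀ l : Fin n, (i l + k) •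
          (Matrix.of fun a b : Fin n => X (Function.update i l (i l + k) a - j b)).det
        = (M.updateRow l fun b =>
            ((i l + k : ℤ) : MvPolynomial ℤ ℂ) * X (i l + k - j b)).det := by
      intro l
      have hmat : (M.updateRow l fun b => X (i l + k - j b))
          = Matrix.of fun a b : Fin n => X (Function.update i l (i l + k) a - j b) := by
        apply Matrix.ext; intro a b
        rcases eq_or_ne a l with h | h
        · subst h
          simp only [Matrix.updateRow_self, Matrix.of_apply, Function.update_self]
        · simp only [Matrix.updateRow_ne h, hM, Matrix.of_apply, Function.update_of_ne h]
      have : (fun b => ((i l + k : ℤ) : MvPolynomial ℤ ℂ) * X (i l + k - j b))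
          = ((i l + k : ℤ) : MvPolynomial ℤ ℂ) • fun b => X (i l + k - j b) := rfl
      rw [this, Matrix.det_updateRow_smul, hmat, zsmul_eq_mul]
    simp_rw [hrhs, det_updateColumn_eq_sum, det_updateRow_eq_sum]
    exact Finset.sum_comm
  · refine Finset.sum_congr rfl fun b _ => ?_
    congr 2
    apply Matrix.ext; intro a b'
    rcases eq_or_ne b' b with h | h
    · subst h
      simp only [Matrix.updateCol_self, Matrix.of_apply, Function.update_self]
    · simp only [Matrix.updateCol_ne h, hM, Matrix.of_apply, Function.update_of_ne h]
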